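/- Let ζ > 0 and α > 1/2 be real numbers, and define σ_j = ζ j^{-α} for j = 1, 2, …, n. Then for every integer k with 1 ≤ k ≤ n − 1, (Σ_{j=k+1}^{n} σ_j²)^{1/2} < σ_{k+1} ((k+1)/k)^{α} √(k/(2α − 1)). -/

import Mathlib

open Finset Real

theorem tail_sum_moderately_ill_posed
    (ζ α : ℝ) (hζ : 0 < ζ) (hα : 1 / 2 < α) (n k : ℕ)
    (σ : ℕ → ℝ) (hσ : ∀ j, σ j = ζ * (j : ℝ) ^ (-α))
    (hk : 1 ≤ k) (hkn : k < n) :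
    Real.sqrt (∑ j ∈ Finset.Icc (k + 1) n, (σ j) ^ 2) <
      σ (k + 1) * (((k : ℝ) + 1) / (k : ℝ)) ^ α * Real.sqrt ((k : ℝ) / (2 * α - 1)) := by
  have hk0 : (0:ℝ) < (k:ℝ) := by exact_mod_cast hk
  have hn0 : (0:ℝ) < (n:ℝ) := by exact_mod_cast hk.trans hkn.le
  have h2α : 0 < 2 * α - 1 := by linarith
  have hk1 : (0:ℝ) < (k:ℝ) + 1 := by linarith
  have hpref : σ (k + 1) * (((k : ℝ) + 1) / (k : ℝ)) ^ α = ζ * (k:ℝ) ^ (-α) := by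
    rw [hσ, Real.div_rpow hk1.le hk0.le, Nat.cast_add, Nat.cast_one,
      Real.rpow_neg hk1.le, Real.rpow_neg hk0.le]
    field_simp
  have hanti : AntitoneOn (fun x : ℝ => x ^ (-(2*α))) (Set.Icc (k:ℝ) (n:ℝ)) := by
    refine (Real.antitoneOn_rpow_Ioi_of_exponent_nonpos (by linarith)).mono ?_
    intro x hx; exact lt_of_lt_of_le hk0 hx.1
  have hsum_int : (∑ i ∈ Finset.Ico k n, ((i:ℕ) + 1 : ℕ) ^ (-(2*α)) : ℝ) ≤
      ∫ x in (k:ℝ)..(n:ℝ), x ^ (-(2*α)) :=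
    AntitoneOn.sum_le_integral_Ico hkn.le hanti
  have hreindex : (∑ j ∈ Finset.Icc (k + 1) n, ((j:ℝ)) ^ (-(2*α))) =
      ∑ i ∈ Finset.Ico k n, (((i:ℕ) + 1 : ℕ) : ℝ) ^ (-(2*α)) := by
    rw [show Finset.Icc (k+1) n = Finset.Ico (k+1) (n+1) from (Finset.Ico_add_one_right_eq_Icc _ _).symm]
    rw [Finset.sum_Ico_eq_sum_range, Finset.sum_Ico_eq_sum_range,
      show n + 1 - (k + 1) = n - k from by omega]
    apply Finset.sum_congr rfl
    intro i _; congr 2; omega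
  have hint : (∫ x in (k:ℝ)..(n:ℝ), x ^ (-(2*α))) < (k:ℝ) ^ (1 - 2*α) / (2*α - 1) := by
    rw [integral_rpow (Or.inr ⟨by linarith, by
      rw [Set.mem_uIcc]; push_neg
      constructor <;> intro h <;> linarith⟩)]
    have h1 : (0:ℝ) < (n:ℝ) ^ (-(2*α) + 1) := Real.rpow_pos_of_pos hn0 _
    rw [show ((n:ℝ) ^ (-(2*α) + 1) - (k:ℝ) ^ (-(2*α) + 1)) / (-(2*α) + 1) =
        ((k:ℝ) ^ (-(2*α) + 1) - (n:ℝ) ^ (-(2*α) + 1)) / (2*α - 1) from by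
      rw [div_eq_div_iff (by linarith) (by linarith)]; ring,
      show -(2*α) + 1 = 1 - 2*α from by ring]
    gcongr
    linarith [Real.rpow_pos_of_pos hn0 (1 - 2*α)]
  have key : (∑ j ∈ Finset.Icc (k + 1) n, ((j:ℝ)) ^ (-(2*α))) <
      (k:ℝ) ^ (1 - 2*α) / (2*α - 1) := by
    rw [hreindex]; exact lt_of_le_of_lt hsum_int hint
  rw [hpref]
  have hsum_eq : (∑ j ∈ Finset.Icc (k + 1) n, (σ j) ^ 2) =
      ζ ^ 2 * ∑ j ∈ Finset.Icc (k + 1) n, ((j:ℝ)) ^ (-(2*α)) := by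
    rw [Finset.mul_sum]
    apply Finset.sum_congr rfl
    intro j hj
    rw [hσ, mul_pow, ← Real.rpow_natCast ((j:ℝ) ^ (-α)) 2, ← Real.rpow_mul (Nat.cast_nonneg j)]
    congr 2
    push_cast; ring
  rw [hsum_eq, Real.sqrt_mul (by positivity), Real.sqrt_sq hζ.le, mul_assoc]
  apply mul_lt_mul_of_pos_left _ hζ
  rw [← Real.sqrt_sq (Real.rpow_nonneg hk0.le (-α)), ← Real.sqrt_mul (by positivity)]
  apply Real.sqrt_lt_sqrt
  · exact Finset.sum_nonneg fun j _ => Real.rpow_nonneg (Nat.cast_nonneg j) _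
  · have hkey2 : ((k:ℝ) ^ (-α)) ^ 2 * ((k:ℝ) / (2 * α - 1)) = (k:ℝ) ^ (1 - 2*α) / (2*α - 1) := by
      rw [← mul_div_assoc]
      congr 1
      rw [← Real.rpow_natCast ((k:ℝ) ^ (-α)) 2, ← Real.rpow_mul hk0.le,
        ← Real.rpow_add_one hk0.ne']
      congr 1
      push_cast; ring
    rw [hkey2]
    exact key
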